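/- Let ε ∈ (0,1/3), let A be an n×d real matrix of rank ρ, let k < ρ, let A_k = U_kΣ_kV_kᵀ be the truncated SVD of A with A_{ρ−k} = A − A_k, and let R be a d×t real matrix such that: (a) V_kᵀR has rank k; (b) ‖A_{ρ−k}RRᵀV_k‖_F ≤ 0.5ε·‖A_{ρ−k}‖_F; (c) ‖A_{ρ−k}R‖_F ≤ √(1+ε)·‖A_{ρ−k}‖_F; and (d) ‖(V_kᵀR)⁺ − (V_kᵀR)ᵀ‖₂ ≤ 3ε. Then A_k = AR(V_kᵀR)⁺V_kᵀ + E, where the n×d matrix E satisfies ‖E‖_F ≤ 4ε·‖A − A_k‖_F. -/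

import Mathlib

open MeasureTheory
open scoped Matrix

/-- Frobenius norm of a real matrix. -/
noncomputable def frobNorm {m n : ℕ} (M : Matrix (Fin m) (Fin n) ℝ) : ℝ :=
  Real.sqrt (∑ i, ∑ j, (M i j) ^ 2)

/-- Spectral (operator) norm of a real matrix, viewed as a linear map between
Euclidean spaces. -/
noncomputable def specNorm {m n : ℕ} (M : Matrix (Fin m) (Fin n) ℝ) : ℝ :=
  ‖LinearMap.toContinuousLinearMap (Matrix.toEuclideanLin M)‖

/-- `P` is the Moore–Penrose pseudoinverse of `M` (the four Penrose conditions;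
such a `P` is unique). -/
def IsMoorePenrose {m n : ℕ} (M : Matrix (Fin m) (Fin n) ℝ)
    (P : Matrix (Fin n) (Fin m) ℝ) : Prop :=
  M * P * M = M ∧ P * M * P = P ∧ (M * P)ᵀ = M * P ∧ (P * M)ᵀ = P * M

/-- `X` is an `n × k` cluster indicator matrix: each row `i` has a single nonzero
entry, in column `f i`, equal to `1/√(z_{f i})` where `z_j` is the number of rows
assigned to column `j`. -/
def IsIndicator {n k : ℕ} (X : Matrix (Fin n) (Fin k) ℝ) : Prop :=
  ∃ f : Fin n → Fin k, ∀ i j, X i j =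
    if f i = j then 1 / Real.sqrt ((Finset.univ.filter fun i' => f i' = j).card) else 0

/-- The singular values of a `k × t` real matrix `M` (in some order): the square
roots of the eigenvalues of `M * Mᵀ`. -/
noncomputable def singVals {k t : ℕ} (M : Matrix (Fin k) (Fin t) ℝ) (i : Fin k) : ℝ :=
  Real.sqrt ((Matrix.isHermitian_mul_conjTranspose_self M).eigenvalues i)

/-- The `d × t` random sign matrix with entries `±1/√t`, as a function of the
sample point `ω` (a `d × t` array of fair coins). -/
noncomputable def signMatrix (d t : ℕ) (ω : Fin d → Fin t → Bool) :
    Matrix (Fin d) (Fin t) ℝ :=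
  Matrix.of fun i j => (if ω i j then (1 : ℝ) else -1) / Real.sqrt t

/-- The law of a `d × t` matrix of i.i.d. fair signs: the uniform probability
measure on all `d × t` sign patterns. -/
noncomputable def signMeasure (d t : ℕ) : Measure (Fin d → Fin t → Bool) :=
  (PMF.uniformOfFintype (Fin d → Fin t → Bool)).toMeasure

section AuxLemmas

open scoped Matrix.Norms.L2Operator in
private lemma specNorm_eq_l2 {a b : ℕ} (D : Matrix (Fin a) (Fin b) ℝ) :
    specNorm D = ‖D‖ := by
  rw [Matrix.l2_opNorm_def, LinearEquiv.trans_apply]; rfl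

open scoped Matrix.Norms.L2Operator in
private lemma specNorm_transpose {a b : ℕ} (D : Matrix (Fin a) (Fin b) ℝ) :
    specNorm Dᵀ = specNorm D := by
  rw [specNorm_eq_l2, specNorm_eq_l2, ← Matrix.conjTranspose_eq_transpose_of_trivial,
    Matrix.l2_opNorm_conjTranspose]

private lemma specNorm_nonneg {a b : ℕ} (D : Matrix (Fin a) (Fin b) ℝ) :
    0 ≤ specNorm D := norm_nonneg _

private lemma frobNorm_eq_norm {m n : ℕ} (M : Matrix (Fin m) (Fin n) ℝ) :
    frobNorm M = ‖(WithLp.equiv 2 ((Fin m × Fin n) → ℝ)).symm (fun p => M p.1 p.2)‖ := by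
  rw [EuclideanSpace.norm_eq, frobNorm, Fintype.sum_prod_type]
  simp [Real.norm_eq_abs, sq_abs]

private lemma frobNorm_nonneg' {m n : ℕ} (M : Matrix (Fin m) (Fin n) ℝ) :
    0 ≤ frobNorm M := Real.sqrt_nonneg _

private lemma frobNorm_add_le {m n : ℕ} (X Y : Matrix (Fin m) (Fin n) ℝ) :
    frobNorm (X + Y) ≤ frobNorm X + frobNorm Y := by
  rw [frobNorm_eq_norm, frobNorm_eq_norm, frobNorm_eq_norm]
  have h : ((WithLp.equiv 2 ((Fin m × Fin n) → ℝ)).symm (fun p => (X + Y) p.1 p.2))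
      = (WithLp.equiv 2 ((Fin m × Fin n) → ℝ)).symm (fun p => X p.1 p.2)
        + (WithLp.equiv 2 ((Fin m × Fin n) → ℝ)).symm (fun p => Y p.1 p.2) := rfl
  rw [h]
  exact norm_add_le _ _

private lemma frobNorm_neg {m n : ℕ} (M : Matrix (Fin m) (Fin n) ℝ) :
    frobNorm (-M) = frobNorm M := by
  simp [frobNorm, Matrix.neg_apply]

private lemma euc_norm_sq {a : ℕ} (w : Fin a → ℝ) :
    ‖(WithLp.equiv 2 (Fin a → ℝ)).symm w‖ ^ 2 = ∑ j, (w j) ^ 2 := by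
  rw [EuclideanSpace.norm_eq, Real.sq_sqrt (by positivity)]
  simp [Real.norm_eq_abs, sq_abs]

private lemma frobNorm_mul_specNorm {a b c : ℕ} (X : Matrix (Fin a) (Fin b) ℝ)
    (D : Matrix (Fin b) (Fin c) ℝ) :
    frobNorm (X * D) ≤ frobNorm X * specNorm D := by
  have key : ∀ i : Fin a, ∑ j, ((X * D) i j) ^ 2 ≤ specNorm D ^ 2 * ∑ l, (X i l) ^ 2 := by
    intro i
    have h1 : Matrix.toEuclideanLin Dᵀ ((WithLp.equiv 2 (Fin b → ℝ)).symm (fun l => X i l))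
        = (WithLp.equiv 2 (Fin c → ℝ)).symm (Dᵀ *ᵥ fun l => X i l) :=
      rfl
    have h2 : ‖Matrix.toEuclideanLin Dᵀ ((WithLp.equiv 2 (Fin b → ℝ)).symm (fun l => X i l))‖
        ≤ specNorm Dᵀ * ‖(WithLp.equiv 2 (Fin b → ℝ)).symm (fun l => X i l)‖ := by
      have := (LinearMap.toContinuousLinearMap (Matrix.toEuclideanLin Dᵀ)).le_opNorm
        ((WithLp.equiv 2 (Fin b → ℝ)).symm (fun l => X i l))
      simpa [specNorm] using this
    rw [h1] at h2
    have h3 : ∑ j, ((X * D) i j) ^ 2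
        = ‖(WithLp.equiv 2 (Fin c → ℝ)).symm (Dᵀ *ᵥ fun l => X i l)‖ ^ 2 := by
      rw [euc_norm_sq]
      refine Finset.sum_congr rfl fun j _ => ?_
      simp [Matrix.mulVec, Matrix.mul_apply, dotProduct, mul_comm]
    rw [h3, specNorm_transpose] at *
    calc ‖(WithLp.equiv 2 (Fin c → ℝ)).symm (Dᵀ *ᵥ fun l => X i l)‖ ^ 2
        ≤ (specNorm D * ‖(WithLp.equiv 2 (Fin b → ℝ)).symm (fun l => X i l)‖) ^ 2 := by
          have h0 : (0:ℝ) ≤ ‖(WithLp.equiv 2 (Fin c → ℝ)).symm (Dᵀ *ᵥ fun l => X i l)‖ :=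
            norm_nonneg _
          nlinarith [h2]
      _ = specNorm D ^ 2 * ∑ l, (X i l) ^ 2 := by
          rw [mul_pow, euc_norm_sq]
  have hsum : ∑ i, ∑ j, ((X * D) i j) ^ 2 ≤ specNorm D ^ 2 * ∑ i, ∑ l, (X i l) ^ 2 := by
    rw [Finset.mul_sum]
    exact Finset.sum_le_sum fun i _ => key i
  rw [frobNorm, frobNorm, mul_comm]
  calc Real.sqrt (∑ i, ∑ j, ((X * D) i j) ^ 2)
      ≤ Real.sqrt (specNorm D ^ 2 * ∑ i, ∑ l, (X i l) ^ 2) := Real.sqrt_le_sqrt hsum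
    _ = specNorm D * Real.sqrt (∑ i, ∑ l, (X i l) ^ 2) := by
        rw [Real.sqrt_mul (sq_nonneg _), Real.sqrt_sq (specNorm_nonneg D)]

private lemma frobSq_eq_trace {m n : ℕ} (M : Matrix (Fin m) (Fin n) ℝ) :
    ∑ i, ∑ j, (M i j) ^ 2 = Matrix.trace (M * Mᵀ) := by
  simp [Matrix.trace, Matrix.diag, Matrix.mul_apply, sq]

private lemma frobNorm_mul_orth {a d k : ℕ} (M : Matrix (Fin a) (Fin k) ℝ)
    (V : Matrix (Fin d) (Fin k) ℝ) (hV : Vᵀ * V = 1) :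
    frobNorm (M * Vᵀ) = frobNorm M := by
  unfold frobNorm
  rw [frobSq_eq_trace, frobSq_eq_trace]
  rw [Matrix.transpose_mul, Matrix.transpose_transpose]
  have hXY : M * Vᵀ * (V * Mᵀ) = M * Mᵀ := by
    calc M * Vᵀ * (V * Mᵀ) = M * (Vᵀ * V * Mᵀ) := by simp only [Matrix.mul_assoc]
      _ = M * Mᵀ := by rw [hV, Matrix.one_mul]
  rw [hXY]

private lemma sum_castLE {k d : ℕ} (h : k ≤ d) (f : Fin d → ℝ) :
    ∑ e : Fin d, (if (e : ℕ) < k then f e else 0) = ∑ i : Fin k, f (Fin.castLE h i) := by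
  let g : ℕ → ℝ := fun j => if hj : j < d then f ⟨j, hj⟩ else 0
  have h1 : ∑ e : Fin d, (if (e : ℕ) < k then f e else 0)
      = ∑ j ∈ Finset.range d, (if j < k then g j else 0) := by
    rw [← Fin.sum_univ_eq_sum_range (fun j => if j < k then g j else 0) d]
    refine Finset.sum_congr rfl fun e _ => ?_
    simp only [g, e.isLt, dif_pos, Fin.eta]
  have h2 : ∑ j ∈ Finset.range d, (if j < k then g j else 0)
      = ∑ j ∈ Finset.range k, g j := by
    rw [← Finset.sum_subset (Finset.range_subset_range.mpr h)
      (fun x _ hx => by simp only [Finset.mem_range, not_lt] at hx; rw [if_neg (not_lt.mpr hx)])]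
    refine Finset.sum_congr rfl fun j hj => ?_
    rw [if_pos (Finset.mem_range.mp hj)]
  have h3 : ∑ i : Fin k, f (Fin.castLE h i) = ∑ j ∈ Finset.range k, g j := by
    rw [← Fin.sum_univ_eq_sum_range g k]
    refine Finset.sum_congr rfl fun i _ => ?_
    simp only [g, dif_pos (lt_of_lt_of_le i.isLt h)]
    rfl
  rw [h1, h2, h3]

end AuxLemmas

set_option maxHeartbeats 1000000 in
/-- Lemma 5 (matrix decomposition A_k = AR(V_kᵀR)⁺V_kᵀ + E). -/
theorem statement14 (n d k ρ t : ℕ) (hkρ : k < ρ) (hρn : ρ ≤ n) (hρd : ρ ≤ d)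
    (ε : ℝ) (hε0 : 0 < ε) (hε : ε < 1 / 3)
    (A : Matrix (Fin n) (Fin d) ℝ)
    (U : Matrix (Fin n) (Fin n) ℝ) (W : Matrix (Fin d) (Fin d) ℝ) (σ : ℕ → ℝ)
    (hU : Uᵀ * U = 1) (hW : Wᵀ * W = 1)
    (hmono : ∀ i j : ℕ, i ≤ j → σ j ≤ σ i)
    (hpos : ∀ i : ℕ, i < ρ → 0 < σ i)
    (hzero : ∀ i : ℕ, ρ ≤ i → σ i = 0)
    (hA : A = U * (Matrix.of fun (i : Fin n) (j : Fin d) =>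
      if (i : ℕ) = (j : ℕ) then σ i else 0) * Wᵀ)
    (Ak : Matrix (Fin n) (Fin d) ℝ)
    (hAk : Ak = U * (Matrix.of fun (i : Fin n) (j : Fin d) =>
      if (i : ℕ) = (j : ℕ) ∧ (i : ℕ) < k then σ i else 0) * Wᵀ)
    (Vk : Matrix (Fin d) (Fin k) ℝ)
    (hVk : Vk = W.submatrix id (Fin.castLE (by omega)))
    (R : Matrix (Fin d) (Fin t) ℝ)
    (hrank : (Vkᵀ * R).rank = k)
    (hb : frobNorm ((A - Ak) * R * Rᵀ * Vk) ≤ 0.5 * ε * frobNorm (A - Ak))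
    (hcc : frobNorm ((A - Ak) * R) ≤ Real.sqrt (1 + ε) * frobNorm (A - Ak))
    (P : Matrix (Fin t) (Fin k) ℝ) (hP : IsMoorePenrose (Vkᵀ * R) P)
    (hd : specNorm (P - (Vkᵀ * R)ᵀ) ≤ 3 * ε) :
    ∃ E : Matrix (Fin n) (Fin d) ℝ,
      Ak = A * R * P * Vkᵀ + E ∧ frobNorm E ≤ 4 * ε * frobNorm (A - Ak) := by
  classical
  have hkd : k ≤ d := by omega
  obtain ⟨h1p, h2p, h3p, h4p⟩ := hP
  -- orthonormality of the columns of W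
  have hWe : ∀ a b : Fin d, (∑ c, W c a * W c b) = if a = b then (1:ℝ) else 0 := by
    intro a b
    have h := congrFun (congrFun hW a) b
    simpa [Matrix.mul_apply, Matrix.one_apply] using h
  have hVkV : Vkᵀ * Vk = 1 := by
    ext i j
    simp only [hVk, Matrix.mul_apply, Matrix.transpose_apply, Matrix.submatrix_apply, id_eq]
    rw [hWe]
    simp [Matrix.one_apply, (Fin.castLE_injective hkd).eq_iff]
  -- MP = 1
  have hMP : (Vkᵀ * R) * P = 1 := by
    set M := Vkᵀ * R with hM
    have hidem : (M * P) * (M * P) = M * P := by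
      calc (M * P) * (M * P) = M * P * M * P := by simp only [Matrix.mul_assoc]
        _ = M * P := by rw [h1p]
    have hrank2 : (M * P).rank = k := by
      refine le_antisymm ((M * P).rank_le_width) ?_
      calc k = M.rank := hrank.symm
        _ = ((M * P) * M).rank := by rw [h1p]
        _ ≤ (M * P).rank := Matrix.rank_mul_le_left _ _
    have htop : LinearMap.range (M * P).mulVecLin = ⊤ := by
      apply Submodule.eq_top_of_finrank_eq
      show (M * P).rank = _
      rw [hrank2, Module.finrank_fin_fun]
    have hid : ∀ v : Fin k → ℝ, (M * P) *ᵥ v = v := by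
      intro v
      obtain ⟨w, hw⟩ := LinearMap.range_eq_top.mp htop v
      rw [← hw]
      show (M * P) *ᵥ ((M * P) *ᵥ w) = (M * P) *ᵥ w
      rw [Matrix.mulVec_mulVec, hidem]
    ext i j
    have h := congrFun (hid (Pi.single j 1)) i
    simpa [Matrix.mulVec_single, Matrix.one_apply, Pi.single_apply, eq_comm] using h
  -- the projector Pk
  set Pk : Matrix (Fin d) (Fin d) ℝ :=
    Matrix.of (fun a b => if a = b ∧ (a : ℕ) < k then 1 else 0) with hPk
  have hWPk : ∀ a e : Fin d, (∑ c, W a c * Pk c e) = if (e : ℕ) < k then W a e else 0 := by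
    intro a e
    rw [Finset.sum_eq_single e]
    · by_cases he : (e : ℕ) < k <;> simp [hPk, he]
    · intro c _ hc; simp [hPk, hc]
    · simp
  have hVVt : Vk * Vkᵀ = W * Pk * Wᵀ := by
    ext a b
    simp only [hVk, Matrix.mul_apply, Matrix.transpose_apply, Matrix.submatrix_apply, id_eq]
    have hre : ∀ e, (∑ c, W a c * Pk c e) * W b e
        = if (e : ℕ) < k then W a e * W b e else 0 := by
      intro e; rw [hWPk]; by_cases he : (e : ℕ) < k <;> simp [he]
    rw [Finset.sum_congr rfl (fun e _ => hre e), sum_castLE hkd (fun e => W a e * W b e)]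
  -- Sk * Pk = Sk
  set Sk : Matrix (Fin n) (Fin d) ℝ :=
    Matrix.of (fun (i : Fin n) (j : Fin d) =>
      if (i : ℕ) = (j : ℕ) ∧ (i : ℕ) < k then σ i else 0) with hSk
  have hSPk : Sk * Pk = Sk := by
    ext i b
    simp only [Matrix.mul_apply]
    rw [Finset.sum_eq_single b]
    · by_cases h1 : (i : ℕ) = (b : ℕ) ∧ (i : ℕ) < k
      · have hbk : (b : ℕ) < k := h1.1 ▸ h1.2
        simp [hSk, hPk, h1, hbk]
      · simp [hSk, hPk, h1]
    · intro c _ hc; simp [hPk, hc]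
    · simp
  have hAkVV : Ak * (Vk * Vkᵀ) = Ak := by
    rw [hAk, hVVt]
    calc U * Sk * Wᵀ * (W * Pk * Wᵀ) = U * (Sk * (Wᵀ * W * (Pk * Wᵀ))) := by
          simp only [Matrix.mul_assoc]
      _ = U * (Sk * (Pk * Wᵀ)) := by rw [hW, Matrix.one_mul]
      _ = U * (Sk * Pk) * Wᵀ := by simp only [Matrix.mul_assoc]
      _ = U * Sk * Wᵀ := by rw [hSPk, Matrix.mul_assoc]
  have hAkRP : Ak * R * P * Vkᵀ = Ak := by
    have h5 : Vkᵀ * (R * (P * Vkᵀ)) = Vkᵀ := by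
      calc Vkᵀ * (R * (P * Vkᵀ)) = (Vkᵀ * R) * P * Vkᵀ := by simp only [Matrix.mul_assoc]
        _ = Vkᵀ := by rw [hMP, Matrix.one_mul]
    conv_lhs => rw [← hAkVV]
    calc Ak * (Vk * Vkᵀ) * R * P * Vkᵀ = Ak * (Vk * (Vkᵀ * (R * (P * Vkᵀ)))) := by
          simp only [Matrix.mul_assoc]
      _ = Ak * (Vk * Vkᵀ) := by rw [h5]
      _ = Ak := hAkVV
  -- the error matrix
  refine ⟨Ak - A * R * P * Vkᵀ, by abel, ?_⟩
  have hE : Ak - A * R * P * Vkᵀ = -((A - Ak) * R * P * Vkᵀ) := by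
    rw [Matrix.sub_mul, Matrix.sub_mul, Matrix.sub_mul, hAkRP]
    abel
  rw [hE, frobNorm_neg]
  have hfrob1 : frobNorm ((A - Ak) * R * P * Vkᵀ) = frobNorm ((A - Ak) * R * P) :=
    frobNorm_mul_orth _ _ hVkV
  rw [hfrob1]
  have hdec : (A - Ak) * R * P
      = (A - Ak) * R * Rᵀ * Vk + (A - Ak) * R * (P - Rᵀ * Vk) := by
    rw [Matrix.mul_sub, Matrix.mul_assoc ((A - Ak) * R) Rᵀ Vk]
    abel
  rw [hdec]
  have hMt : (Vkᵀ * R)ᵀ = Rᵀ * Vk := by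
    rw [Matrix.transpose_mul, Matrix.transpose_transpose]
  have t3 : specNorm (P - Rᵀ * Vk) ≤ 3 * ε := by rw [← hMt]; exact hd
  have t2 : frobNorm ((A - Ak) * R * (P - Rᵀ * Vk))
      ≤ frobNorm ((A - Ak) * R) * specNorm (P - Rᵀ * Vk) :=
    frobNorm_mul_specNorm _ _
  have hF : 0 ≤ frobNorm (A - Ak) := frobNorm_nonneg' _
  have hFR : 0 ≤ frobNorm ((A - Ak) * R) := frobNorm_nonneg' _
  have hs : Real.sqrt (1 + ε) ≤ 7 / 6 := by
    rw [show (7/6 : ℝ) = Real.sqrt ((7/6) ^ 2) from (Real.sqrt_sq (by norm_num)).symm]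
    apply Real.sqrt_le_sqrt
    nlinarith
  have t5 : frobNorm ((A - Ak) * R) * specNorm (P - Rᵀ * Vk)
      ≤ (Real.sqrt (1 + ε) * frobNorm (A - Ak)) * (3 * ε) :=
    mul_le_mul hcc t3 (specNorm_nonneg _) (mul_nonneg (Real.sqrt_nonneg _) hF)
  have t6 : (Real.sqrt (1 + ε) * frobNorm (A - Ak)) * (3 * ε)
      ≤ ((7/6 : ℝ) * frobNorm (A - Ak)) * (3 * ε) := by
    have := mul_le_mul_of_nonneg_right (mul_le_mul_of_nonneg_right hs hF)
      (by positivity : (0:ℝ) ≤ 3 * ε)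
    exact this
  have htri := frobNorm_add_le ((A - Ak) * R * Rᵀ * Vk) ((A - Ak) * R * (P - Rᵀ * Vk))
  nlinarith [hb, t2, t5, t6, htri, mul_nonneg hε0.le hF]
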